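/- Let x* ∈ X. Suppose that for every continuously differentiable function φ : ℝⁿ → ℝ the following implication holds: if x* is AS-stationary with respect to φ, then x* is S-stationary with respect to φ. Then x* is AS-regular. -/

import Mathlib

open Filter Topology

noncomputable section

/-- Euclidean n-space. -/
abbrev E (n : ℕ) : Type := EuclideanSpace ℝ (Fin n)

/-- The SP-Lagrangian L(x, λ, μ) = φ(x) + λᵀg(x) + μᵀh(x). -/
def LSP {n m q : ℕ} (f : E n → ℝ) (g : Fin m → E n → ℝ) (h : Fin q → E n → ℝ)
    (lam : Fin m → ℝ) (mu : Fin q → ℝ) (x : E n) : ℝ :=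
  f x + (∑ i, lam i * g i x) + (∑ j, mu j * h j x)

/-- S-stationarity of x* with respect to the objective `f`. -/
def SStat {n m q : ℕ} (f : E n → ℝ) (g : Fin m → E n → ℝ) (h : Fin q → E n → ℝ)
    (xstar : E n) : Prop :=
  ∃ (lam : Fin m → ℝ) (mu : Fin q → ℝ),
    (∀ i, 0 ≤ lam i) ∧ (∀ i, lam i * g i xstar = 0) ∧
    ∀ i, xstar i ≠ 0 → gradient (LSP f g h lam mu) xstar i = 0

/-- AS-stationarity of x* with respect to the objective `f`. -/
def ASStat {n m q : ℕ} (f : E n → ℝ) (g : Fin m → E n → ℝ) (h : Fin q → E n → ℝ)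
    (xstar : E n) : Prop :=
  ∃ (xk : ℕ → E n) (lamk : ℕ → Fin m → ℝ) (muk : ℕ → Fin q → ℝ),
    Tendsto xk atTop (𝓝 xstar) ∧
    (∀ k i, 0 ≤ lamk k i) ∧
    (∀ i, xstar i ≠ 0 →
      Tendsto (fun k => gradient (LSP f g h (lamk k) (muk k)) (xk k) i) atTop (𝓝 0)) ∧
    (∀ i, Tendsto (fun k => min (-(g i (xk k))) (lamk k i)) atTop (𝓝 0))

/-- The cone K(x) (relative to the fixed point x*). -/
def Kcone {n m q : ℕ} (g : Fin m → E n → ℝ) (h : Fin q → E n → ℝ)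
    (xstar : E n) (x : E n) : Set (E n) :=
  {d | ∃ (mu : Fin q → ℝ) (lam : Fin m → ℝ),
    (∀ i, 0 ≤ lam i) ∧ (∀ i, g i xstar ≠ 0 → lam i = 0) ∧
    ∀ j, xstar j ≠ 0 →
      d j = (∑ i, mu i * gradient (h i) x j) + ∑ i, lam i * gradient (g i) x j}

/-- AS-regularity: outer semicontinuity of K(·) at x*. -/
def ASRegular {n m q : ℕ} (g : Fin m → E n → ℝ) (h : Fin q → E n → ℝ)
    (xstar : E n) : Prop :=
  ∀ (xk dk : ℕ → E n) (d : E n),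
    Tendsto xk atTop (𝓝 xstar) → Tendsto dk atTop (𝓝 d) →
    (∀ k, dk k ∈ Kcone g h xstar (xk k)) → d ∈ Kcone g h xstar xstar

lemma hasGradientAt_LSP {n m q : ℕ} (f : E n → ℝ) (g : Fin m → E n → ℝ)
    (h : Fin q → E n → ℝ) (lam : Fin m → ℝ) (mu : Fin q → ℝ) (x : E n)
    (hf : DifferentiableAt ℝ f x) (hg : ∀ i, DifferentiableAt ℝ (g i) x)
    (hh : ∀ j, DifferentiableAt ℝ (h j) x) :
    HasGradientAt (LSP f g h lam mu)
      (gradient f x + (∑ i, lam i • gradient (g i) x)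
        + ∑ j, mu j • gradient (h j) x) x := by
  rw [hasGradientAt_iff_hasFDerivAt]
  have hF : HasFDerivAt (LSP f g h lam mu)
      ((InnerProductSpace.toDual ℝ (E n)) (gradient f x)
        + (∑ i, lam i • (InnerProductSpace.toDual ℝ (E n)) (gradient (g i) x))
        + ∑ j, mu j • (InnerProductSpace.toDual ℝ (E n)) (gradient (h j) x)) x := by
    have := ((hf.hasGradientAt.hasFDerivAt).fun_add
        (HasFDerivAt.fun_sum fun i (_ : i ∈ Finset.univ) =>
          ((hg i).hasGradientAt.hasFDerivAt).const_mul (lam i))).fun_add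
        (HasFDerivAt.fun_sum fun j (_ : j ∈ Finset.univ) =>
          ((hh j).hasGradientAt.hasFDerivAt).const_mul (mu j))
    exact this
  simpa [map_add, map_sum, map_smul] using hF

lemma gradient_LSP_apply {n m q : ℕ} (f : E n → ℝ) (g : Fin m → E n → ℝ)
    (h : Fin q → E n → ℝ) (lam : Fin m → ℝ) (mu : Fin q → ℝ) (x : E n) (j : Fin n)
    (hf : DifferentiableAt ℝ f x) (hg : ∀ i, DifferentiableAt ℝ (g i) x)
    (hh : ∀ i, DifferentiableAt ℝ (h i) x) :
    gradient (LSP f g h lam mu) x j = gradient f x j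
      + (∑ i, lam i * gradient (g i) x j) + ∑ i, mu i * gradient (h i) x j := by
  rw [(hasGradientAt_LSP f g h lam mu x hf hg hh).gradient]
  have h1 : ((∑ i, lam i • gradient (g i) x : E n)) j
      = ∑ i, lam i * gradient (g i) x j := by
    rw [show ((∑ i, lam i • gradient (g i) x : E n)) j
        = EuclideanSpace.proj j (∑ i, lam i • gradient (g i) x) from rfl, map_sum]
    simp [EuclideanSpace.proj]
  have h2 : ((∑ i, mu i • gradient (h i) x : E n)) j
      = ∑ i, mu i * gradient (h i) x j := by
    rw [show ((∑ i, mu i • gradient (h i) x : E n)) j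
        = EuclideanSpace.proj j (∑ i, mu i • gradient (h i) x) from rfl, map_sum]
    simp [EuclideanSpace.proj]
  simp [h1, h2]

lemma hasGradientAt_neg_inner {n : ℕ} (d x : E n) :
    HasGradientAt (fun y : E n => (inner ℝ (-d) y : ℝ)) (-d) x := by
  have : HasFDerivAt (fun y : E n => (inner ℝ (-d) y : ℝ))
      ((InnerProductSpace.toDual ℝ (E n)) (-d)) x := by
    have := ((InnerProductSpace.toDual ℝ (E n)) (-d)).hasFDerivAt (x := x)
    convert this using 1; funext y; simp [InnerProductSpace.toDual_apply_apply]
  simpa using this.hasGradientAt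

/-- if, for every continuously differentiable objective φ,
AS-stationarity of x* w.r.t. φ implies S-stationarity of x* w.r.t. φ, then
x* is AS-regular. -/
theorem stmt_11 {n m q : ℕ} (hn : 1 ≤ n)
    (g : Fin m → E n → ℝ) (h : Fin q → E n → ℝ)
    (hg : ∀ i, ContDiff ℝ 1 (g i)) (hh : ∀ j, ContDiff ℝ 1 (h j))
    (xstar : E n)
    -- x* ∈ X :
    (hgx : ∀ i, g i xstar ≤ 0) (hhx : ∀ j, h j xstar = 0) (hxnn : ∀ i, 0 ≤ xstar i)
    (himp : ∀ φ : E n → ℝ, ContDiff ℝ 1 φ →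
      ASStat φ g h xstar → SStat φ g h xstar) :
    ASRegular g h xstar := by
  intro xk dk d hxk hdk hmem
  set φ : E n → ℝ := fun y => (inner ℝ (-d) y : ℝ) with hφdef
  have hφ : ContDiff ℝ 1 φ := by
    have hc : φ = ⇑((InnerProductSpace.toDual ℝ (E n)) (-d)) := by
      funext y; simp [hφdef, InnerProductSpace.toDual_apply_apply]
    rw [hc]; exact ContinuousLinearMap.contDiff _
  have hφgrad : ∀ y, gradient φ y = -d := fun y => (hasGradientAt_neg_inner d y).gradient
  have hφd : ∀ y, DifferentiableAt ℝ φ y :=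
    fun y => (hasGradientAt_neg_inner d y).differentiableAt
  have hgd : ∀ i (y : E n), DifferentiableAt ℝ (g i) y :=
    fun i y => ((hg i).differentiable one_ne_zero).differentiableAt
  have hhd : ∀ j (y : E n), DifferentiableAt ℝ (h j) y :=
    fun j y => ((hh j).differentiable one_ne_zero).differentiableAt
  choose muk lamk hnn hcomp heq using hmem
  have hAS : ASStat φ g h xstar := by
    refine ⟨xk, lamk, muk, hxk, hnn, ?_, ?_⟩
    · intro i hi
      have hval : ∀ k, gradient (LSP φ g h (lamk k) (muk k)) (xk k) i = dk k i - d i := by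
        intro k
        rw [gradient_LSP_apply _ _ _ _ _ _ _ (hφd _) (fun j => hgd j _) (fun j => hhd j _),
          hφgrad]
        simp only [PiLp.neg_apply]
        rw [heq k i hi]; ring
      simp_rw [hval]
      have hdki : Tendsto (fun k => dk k i) atTop (𝓝 (d i)) :=
        ((EuclideanSpace.proj i).continuous.tendsto d).comp hdk
      simpa using hdki.sub (tendsto_const_nhds (x := d i))
    · intro i
      have hgc : Tendsto (fun k => g i (xk k)) atTop (𝓝 (g i xstar)) :=
        ((hg i).continuous.tendsto xstar).comp hxk
      by_cases hgi : g i xstar = 0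
      · have habs : Tendsto (fun k => |g i (xk k)|) atTop (𝓝 0) := by
          have := hgc.abs; rw [hgi] at this; simpa using this
        refine tendsto_of_tendsto_of_tendsto_of_le_of_le (by simpa using habs.neg) habs
          (fun k => le_min (neg_le_neg (le_abs_self _))
            (le_trans (neg_nonpos.mpr (abs_nonneg _)) (hnn k i)))
          (fun k => le_trans (min_le_left _ _) (neg_le_abs _))
      · have hl0 : ∀ k, lamk k i = 0 := fun k => hcomp k i hgi
        simp_rw [hl0]
        have hlim : Tendsto (fun k => min (-(g i (xk k))) 0) atTop
            (𝓝 (min (-(g i xstar)) 0)) := hgc.neg.min tendsto_const_nhds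
        rwa [min_eq_right (neg_nonneg.mpr (hgx i))] at hlim
  obtain ⟨lam, mu, hlnn, hlcomp, hgrad⟩ := himp φ hφ hAS
  refine ⟨mu, lam, hlnn, fun i hi => ?_, fun j hj => ?_⟩
  · rcases mul_eq_zero.mp (hlcomp i) with h' | h'
    · exact h'
    · exact absurd h' hi
  · have hz := hgrad j hj
    rw [gradient_LSP_apply _ _ _ _ _ _ _ (hφd _) (fun i => hgd i _) (fun i => hhd i _),
      hφgrad] at hz
    simp only [PiLp.neg_apply] at hz
    linarith
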